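/- arXiv:2403.17193 — 2 statements merged into one kernel-verified Lean document; each statement's English description precedes it below -/
import Mathlib

section
/- Every nonzero 2-dimensional Leibniz algebra over ℂ is isomorphic to exactly one of the following algebras, given by a multiplication table on a basis e1, e2 (all unlisted products of basis elements are zero): L1: [e1,e1] = e2; L2: [e1,e2] = e1; L3: [e1,e2] = e2, [e2,e1] = −e2. In particular L1, L2, L3 are pairwise non-isomorphic. -/
noncomputable section

/-- The 2-dimensional complex vector space. -/
abbrev V2 : Type := Fin 2 → ℂ

/-- The bilinear multiplication on `V2` determined by a table of structure constants:
`c i j` is the product of the `i`-th and `j`-th basis vectors. -/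
def tm (c : Fin 2 → Fin 2 → V2) : V2 → V2 → V2 :=
  fun x y => ∑ i, ∑ j, (x i * y j) • c i j

/-- Multiplication table with the given values of `e1*e1`, `e1*e2`, `e2*e1`, `e2*e2`. -/
def tbl (a b c d : V2) : Fin 2 → Fin 2 → V2 := ![![a, b], ![c, d]]

/-- The zero multiplication on `V2`. -/
def zm : V2 → V2 → V2 := fun _ _ => 0

/-- Isomorphism of algebras with one multiplication: a ℂ-linear bijection preserving
the multiplication. -/
def Iso1 {A : Type*} [AddCommGroup A] [Module ℂ A] {B : Type*} [AddCommGroup B]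
    [Module ℂ B] (μ : A → A → A) (ν : B → B → B) : Prop :=
  ∃ φ : A ≃ₗ[ℂ] B, ∀ x y, φ (μ x y) = ν (φ x) (φ y)

/-- Isomorphism of algebras with two multiplications: a ℂ-linear bijection preserving
both multiplications. -/
def Iso2 {A : Type*} [AddCommGroup A] [Module ℂ A] {B : Type*} [AddCommGroup B]
    [Module ℂ B] (μ₁ μ₂ : A → A → A) (ν₁ ν₂ : B → B → B) : Prop :=
  ∃ φ : A ≃ₗ[ℂ] B,
    (∀ x y, φ (μ₁ x y) = ν₁ (φ x) (φ y)) ∧ (∀ x y, φ (μ₂ x y) = ν₂ (φ x) (φ y))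

/-- The commutative associative algebra A01: `e1·e1 = e1`, `e2·e2 = e2`. -/
def cA01 : Fin 2 → Fin 2 → V2 := tbl ![1,0] 0 0 ![0,1]

/-- The commutative associative algebra A02: `e1·e1 = e1`, `e1·e2 = e2·e1 = e2`. -/
def cA02 : Fin 2 → Fin 2 → V2 := tbl ![1,0] ![0,1] ![0,1] 0

/-- The commutative associative algebra A03: `e1·e1 = e1`. -/
def cA03 : Fin 2 → Fin 2 → V2 := tbl ![1,0] 0 0 0

/-- The commutative associative algebra A04: `e1·e1 = e2`. -/
def cA04 : Fin 2 → Fin 2 → V2 := tbl ![0,1] 0 0 0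

/-- The three nonzero 2-dimensional Leibniz algebras L1, L2, L3. -/
def leibAlg : Fin 3 → Fin 2 → Fin 2 → V2 :=
  ![tbl ![0,1] 0 0 0, tbl 0 ![1,0] 0 0, tbl 0 ![0,1] ![0,-1] 0]
lemma iso_of_table {L : Type*} [AddCommGroup L] [Module ℂ L] (br : L →ₗ[ℂ] L →ₗ[ℂ] L)
    (c : Fin 2 → Fin 2 → V2) (b : Module.Basis (Fin 2) ℂ L)
    (h : ∀ i j, br (b i) (b j) = c i j 0 • b 0 + c i j 1 • b 1) :
    Iso1 (fun x y => br x y) (tm c) := by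
  refine ⟨b.equivFun, ?_⟩
  intro x y
  have hx : x = b.equivFun x 0 • b 0 + b.equivFun x 1 • b 1 := by
    conv_lhs => rw [← b.sum_equivFun x]
    simp only [Fin.sum_univ_two]
  have hy : y = b.equivFun y 0 • b 0 + b.equivFun y 1 • b 1 := by
    conv_lhs => rw [← b.sum_equivFun y]
    simp only [Fin.sum_univ_two]
  conv_lhs => rw [hx, hy]
  funext k
  simp only [map_add, map_smul, LinearMap.add_apply, LinearMap.smul_apply, h,
    tm, Fin.sum_univ_two, Module.Basis.equivFun_apply]
  fin_cases k <;>
    simp [Module.Basis.repr_self, Finsupp.single_apply, Pi.add_apply, Pi.smul_apply] <;> ring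

lemma exists_coords {L : Type*} [AddCommGroup L] [Module ℂ L]
    (hdim : Module.finrank ℂ L = 2) {v w : L} (hli : LinearIndependent ℂ ![v, w]) (z : L) :
    ∃ α β : ℂ, z = α • v + β • w := by
  have card2 : Fintype.card (Fin 2) = Module.finrank ℂ L := by simp [hdim]
  let b : Module.Basis (Fin 2) ℂ L := basisOfLinearIndependentOfCardEqFinrank hli card2
  have h0 : b 0 = v := by
    show basisOfLinearIndependentOfCardEqFinrank hli card2 0 = v
    rw [coe_basisOfLinearIndependentOfCardEqFinrank]; simp
  have h1 : b 1 = w := by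
    show basisOfLinearIndependentOfCardEqFinrank hli card2 1 = w
    rw [coe_basisOfLinearIndependentOfCardEqFinrank]; simp
  refine ⟨b.equivFun z 0, b.equivFun z 1, ?_⟩
  conv_lhs => rw [← b.sum_equivFun z]
  rw [Fin.sum_univ_two, h0, h1]

lemma iso1_symm {A : Type*} [AddCommGroup A] [Module ℂ A] {B : Type*} [AddCommGroup B]
    [Module ℂ B] {μ : A → A → A} {ν : B → B → B} (h : Iso1 μ ν) : Iso1 ν μ := by
  obtain ⟨φ, hφ⟩ := h
  refine ⟨φ.symm, fun x y => ?_⟩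
  have h2 := hφ (φ.symm x) (φ.symm y)
  rw [φ.apply_symm_apply, φ.apply_symm_apply] at h2
  rw [← h2, φ.symm_apply_apply]

lemma symm_transfer {A : Type*} [AddCommGroup A] [Module ℂ A] {B : Type*} [AddCommGroup B]
    [Module ℂ B] {μ : A → A → A} {ν : B → B → B} (h : Iso1 μ ν)
    (hs : ∀ x y, μ x y = μ y x) : ∀ u v, ν u v = ν v u := by
  obtain ⟨φ, hφ⟩ := h
  intro u v
  have h1 := hφ (φ.symm u) (φ.symm v)
  have h2 := hφ (φ.symm v) (φ.symm u)
  rw [φ.apply_symm_apply, φ.apply_symm_apply] at h1 h2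
  rw [← h1, ← h2, hs]

lemma anti_transfer {A : Type*} [AddCommGroup A] [Module ℂ A] {B : Type*} [AddCommGroup B]
    [Module ℂ B] {μ : A → A → A} {ν : B → B → B} (h : Iso1 μ ν)
    (hs : ∀ x y, μ x y = - μ y x) : ∀ u v, ν u v = - ν v u := by
  obtain ⟨φ, hφ⟩ := h
  intro u v
  have h1 := hφ (φ.symm u) (φ.symm v)
  have h2 := hφ (φ.symm v) (φ.symm u)
  rw [φ.apply_symm_apply, φ.apply_symm_apply] at h1 h2
  rw [← h1, ← h2, hs, map_neg]

lemma L1_symm : ∀ x y : V2, tm (leibAlg 0) x y = tm (leibAlg 0) y x := by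
  intro x y
  funext k
  fin_cases k <;> simp [tm, leibAlg, tbl, Fin.sum_univ_two, mul_comm]

lemma L3_anti : ∀ x y : V2, tm (leibAlg 2) x y = - tm (leibAlg 2) y x := by
  intro x y
  funext k
  fin_cases k <;> simp [tm, leibAlg, tbl, Fin.sum_univ_two, Matrix.cons_val_two] <;> ring

lemma L2_not_symm : ¬ (∀ x y : V2, tm (leibAlg 1) x y = tm (leibAlg 1) y x) := by
  intro h
  have h1 := congrFun (h ![1,0] ![0,1]) 0
  norm_num [tm, leibAlg, tbl, Fin.sum_univ_two] at h1

lemma L3_not_symm : ¬ (∀ x y : V2, tm (leibAlg 2) x y = tm (leibAlg 2) y x) := by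
  intro h
  have h1 := congrFun (h ![1,0] ![0,1]) 1
  norm_num [tm, leibAlg, tbl, Fin.sum_univ_two, Matrix.cons_val_two] at h1

lemma L2_not_anti : ¬ (∀ x y : V2, tm (leibAlg 1) x y = - tm (leibAlg 1) y x) := by
  intro h
  have h1 := congrFun (h ![1,0] ![0,1]) 0
  norm_num [tm, leibAlg, tbl, Fin.sum_univ_two] at h1

lemma not_iso_01 : ¬ Iso1 (tm (leibAlg 0)) (tm (leibAlg 1)) :=
  fun h => L2_not_symm (symm_transfer h L1_symm)

lemma not_iso_02 : ¬ Iso1 (tm (leibAlg 0)) (tm (leibAlg 2)) :=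
  fun h => L3_not_symm (symm_transfer h L1_symm)

lemma not_iso_12 : ¬ Iso1 (tm (leibAlg 1)) (tm (leibAlg 2)) :=
  fun h => L2_not_anti (anti_transfer (iso1_symm h) L3_anti)
/-- Every nonzero 2-dimensional Leibniz algebra over ℂ is isomorphic to
exactly one of L1 (`[e1,e1]=e2`), L2 (`[e1,e2]=e1`), L3 (`[e1,e2]=e2, [e2,e1]=-e2`);
in particular L1, L2, L3 are pairwise non-isomorphic. -/
theorem statement4 (L : Type*) [AddCommGroup L] [Module ℂ L]
    (hdim : Module.finrank ℂ L = 2)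
    (br : L →ₗ[ℂ] L →ₗ[ℂ] L)
    (hleib : ∀ x y z : L, br (br x y) z = br (br x z) y + br x (br y z))
    (hnz : ∃ x y : L, br x y ≠ 0) :
    (∃ i : Fin 3, Iso1 (fun x y => br x y) (tm (leibAlg i))) ∧
    (∀ i j : Fin 3, Iso1 (tm (leibAlg i)) (tm (leibAlg j)) → i = j) := by
  have card2 : Fintype.card (Fin 2) = Module.finrank ℂ L := by simp [hdim]
  constructor
  · -- existence
    by_cases hsq : ∀ x : L, br x x = 0
    · -- antisymmetric case: L3
      have hanti : ∀ x y : L, br x y = - br y x := by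
        intro x y
        have h1 := hsq (x + y)
        simp only [map_add, LinearMap.add_apply] at h1
        simp only [hsq, zero_add, add_zero] at h1
        first
        | exact eq_neg_of_add_eq_zero_right h1
        | exact eq_neg_of_add_eq_zero_left h1
      obtain ⟨a, w, haw⟩ := hnz
      have hw : w ≠ 0 := by rintro rfl; simp at haw
      have hli : LinearIndependent ℂ ![a, w] := by
        rw [LinearIndependent.pair_iff]
        intro s t hst
        have h2 : s • br a w = 0 := by
          have h3 := congrArg (fun z => br z w) hst
          simpa [map_add, LinearMap.add_apply, map_smul, LinearMap.smul_apply, hsq] using h3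
        have hs : s = 0 := by
          rcases smul_eq_zero.mp h2 with h | h
          · exact h
          · exact absurd h haw
        refine ⟨hs, ?_⟩
        rw [hs, zero_smul, zero_add] at hst
        rcases smul_eq_zero.mp hst with h | h
        · exact h
        · exact absurd h hw
      obtain ⟨α, β, hcc⟩ := exists_coords hdim hli (br a w)
      have hac : br a (br a w) = β • br a w := by
        conv_lhs => rw [hcc]
        rw [map_add, map_smul, map_smul, hsq a, smul_zero, zero_add]
      have hwc : br w (br a w) = -(α • br a w) := by
        conv_lhs => rw [hcc]
        rw [map_add, map_smul, map_smul, hsq w, smul_zero, add_zero, hanti w a, smul_neg]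
      obtain ⟨u, hu⟩ : ∃ u : L, br u (br a w) = br a w := by
        by_cases hβ : β = 0
        · have hα : α ≠ 0 := by
            intro h0
            rw [h0, hβ, zero_smul, zero_smul, add_zero] at hcc
            exact haw hcc
          refine ⟨(-α⁻¹) • w, ?_⟩
          rw [map_smul, LinearMap.smul_apply, hwc, smul_neg, neg_smul, neg_neg, smul_smul,
            inv_mul_cancel₀ hα, one_smul]
        · refine ⟨β⁻¹ • a, ?_⟩
          rw [map_smul, LinearMap.smul_apply, hac, smul_smul, inv_mul_cancel₀ hβ, one_smul]
      have hcu : br (br a w) u = -(br a w) := by rw [hanti (br a w) u, hu]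
      have hli2 : LinearIndependent ℂ ![u, br a w] := by
        rw [LinearIndependent.pair_iff]
        intro s t hst
        have h2 : s • br a w = 0 := by
          have h3 := congrArg (fun z => br z (br a w)) hst
          simpa [map_add, LinearMap.add_apply, map_smul, LinearMap.smul_apply, hsq, hu]
            using h3
        have hs : s = 0 := by
          rcases smul_eq_zero.mp h2 with h | h
          · exact h
          · exact absurd h haw
        refine ⟨hs, ?_⟩
        rw [hs, zero_smul, zero_add] at hst
        rcases smul_eq_zero.mp hst with h | h
        · exact h
        · exact absurd h haw
      refine ⟨2, iso_of_table br _ (basisOfLinearIndependentOfCardEqFinrank hli2 card2) ?_⟩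
      intro i j
      fin_cases i <;> fin_cases j <;>
        simp [coe_basisOfLinearIndependentOfCardEqFinrank, leibAlg, tbl,
          Matrix.cons_val_two, Matrix.vecHead, Matrix.vecTail, hsq, hu, hcu]
    · -- squares case: L1 or L2
      push_neg at hsq
      obtain ⟨e, he⟩ := hsq
      have hq : ∀ x : L, br x (br e e) = 0 := fun x => left_eq_add.mp (hleib x e e)
      have hli : LinearIndependent ℂ ![e, br e e] := by
        rw [LinearIndependent.pair_iff]
        intro s t hst
        have h2 : s • br e e = 0 := by
          have h3 := congrArg (fun z => br e z) hst
          simpa [map_add, map_smul, hq] using h3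
        have hs : s = 0 := by
          rcases smul_eq_zero.mp h2 with h | h
          · exact h
          · exact absurd h he
        refine ⟨hs, ?_⟩
        rw [hs, zero_smul, zero_add] at hst
        rcases smul_eq_zero.mp hst with h | h
        · exact h
        · exact absurd h he
      obtain ⟨α, β, hz⟩ := exists_coords hdim hli (br (br e e) e)
      have hα : α = 0 := by
        have h3 := hleib e (br e e) e
        rw [hq e, hz] at h3
        simp only [map_add, map_smul, map_zero, LinearMap.zero_apply, hq, smul_zero,
          add_zero, zero_add] at h3
        rcases smul_eq_zero.mp h3.symm with h | h
        · exact h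
        · exact absurd h he
      rw [hα, zero_smul, zero_add] at hz
      by_cases hβ : β = 0
      · -- L1
        refine ⟨0, iso_of_table br _ (basisOfLinearIndependentOfCardEqFinrank hli card2) ?_⟩
        intro i j
        fin_cases i <;> fin_cases j <;>
          simp [coe_basisOfLinearIndependentOfCardEqFinrank, leibAlg, tbl, hq, hz, hβ]
      · -- L2
        have h12 : br ((β⁻¹*β⁻¹) • br e e) (β⁻¹ • e - (β⁻¹*β⁻¹) • br e e) =
            (β⁻¹*β⁻¹) • br e e := by
          simp only [map_sub, map_smul, LinearMap.sub_apply, LinearMap.smul_apply, hq, hz,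
            smul_zero, sub_zero, smul_smul]
          match_scalars <;> field_simp
        have h21 : br (β⁻¹ • e - (β⁻¹*β⁻¹) • br e e) ((β⁻¹*β⁻¹) • br e e) = 0 := by
          rw [map_smul, hq, smul_zero]
        have h11 : br ((β⁻¹*β⁻¹) • br e e) ((β⁻¹*β⁻¹) • br e e) = 0 := by
          rw [map_smul, hq, smul_zero]
        have h22 : br (β⁻¹ • e - (β⁻¹*β⁻¹) • br e e) (β⁻¹ • e - (β⁻¹*β⁻¹) • br e e) = 0 := by
          simp only [map_sub, map_smul, LinearMap.sub_apply, LinearMap.smul_apply, hq, hz,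
            smul_zero, sub_zero, smul_smul]
          match_scalars <;> field_simp <;> ring
        have hli2 : LinearIndependent ℂ ![(β⁻¹*β⁻¹) • br e e,
            β⁻¹ • e - (β⁻¹*β⁻¹) • br e e] := by
          rw [LinearIndependent.pair_iff]
          intro s t hst
          have key : (t*β⁻¹) • e + ((s - t)*(β⁻¹*β⁻¹)) • br e e = 0 := by
            rw [← hst]; module
          obtain ⟨h1, h2⟩ := LinearIndependent.pair_iff.mp hli _ _ key
          have ht : t = 0 := by
            rcases mul_eq_zero.mp h1 with h | h
            · exact h
            · exact absurd h (inv_ne_zero hβ)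
          subst ht
          refine ⟨?_, rfl⟩
          rcases mul_eq_zero.mp h2 with h | h
          · simpa using h
          · rcases mul_eq_zero.mp h with h' | h' <;> exact absurd h' (inv_ne_zero hβ)
        refine ⟨1, iso_of_table br _ (basisOfLinearIndependentOfCardEqFinrank hli2 card2) ?_⟩
        intro i j
        fin_cases i <;> fin_cases j <;>
          simp [coe_basisOfLinearIndependentOfCardEqFinrank, leibAlg, tbl, Matrix.vecHead,
            Matrix.vecTail, hq, hz, smul_smul] <;>
          try (match_scalars <;> field_simp <;> ring)
  · -- uniqueness
    intro i j hij
    fin_cases i <;> fin_cases j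
    · rfl
    · exact absurd hij not_iso_01
    · exact absurd hij not_iso_02
    · exact absurd (iso1_symm hij) not_iso_01
    · rfl
    · exact absurd hij not_iso_12
    · exact absurd (iso1_symm hij) not_iso_02
    · exact absurd (iso1_symm hij) not_iso_12
    · rfl
end
end

section
/- Every nonzero 2-dimensional generic Poisson algebra (G, ·, [−,−]) over ℂ is isomorphic to one of the following algebras, given on a basis e1, e2 (all unlisted products of basis elements, other than those forced by commutativity of · or anticommutativity of [−,−], are zero): with [−,−] ≡ 0: A01: e1·e1 = e1, e2·e2 = e2; A02: e1·e1 = e1, e1·e2 = e2; A03: e1·e1 = e1; A04: e1·e1 = e2; or with · ≡ 0: the algebra with [e1,e2] = e2, [e2,e1] = −e2. -/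
noncomputable section

open Module


lemma tm_eq (c : Fin 2 → Fin 2 → V2) (x y : V2) :
    tm c x y = (x 0 * y 0) • c 0 0 + (x 0 * y 1) • c 0 1 + (x 1 * y 0) • c 1 0
      + (x 1 * y 1) • c 1 1 := by
  simp [tm, Fin.sum_univ_two]; abel

def tmL (c : Fin 2 → Fin 2 → V2) : V2 →ₗ[ℂ] V2 →ₗ[ℂ] V2 :=
  LinearMap.mk₂ ℂ (tm c)
    (fun x x' y => by simp only [tm_eq, Pi.add_apply, add_mul]; module)
    (fun a x y => by simp only [tm_eq, Pi.smul_apply, smul_eq_mul, mul_assoc]; module)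
    (fun x y y' => by simp only [tm_eq, Pi.add_apply, mul_add]; module)
    (fun a x y => by
      simp only [tm_eq, Pi.smul_apply, smul_eq_mul]
      rw [show ∀ u v : ℂ, u * (a * v) = a * (u * v) by intros; ring]; module)

lemma tm_single (c : Fin 2 → Fin 2 → V2) (i j : Fin 2) :
    tm c (Pi.single i 1) (Pi.single j 1) = c i j := by
  fin_cases i <;> fin_cases j <;>
    simp [tm_eq, Pi.single_apply]

lemma equivFun_basis {G : Type*} [AddCommGroup G] [Module ℂ G]
    (b : Basis (Fin 2) ℂ G) (i : Fin 2) : b.equivFun (b i) = Pi.single i 1 := by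
  funext j
  rw [Basis.equivFun_self]
  simp [Pi.single_apply, eq_comm]

lemma repr_bilin {G : Type*} [AddCommGroup G] [Module ℂ G] (f : G →ₗ[ℂ] G →ₗ[ℂ] G)
    (b : Basis (Fin 2) ℂ G) (c : Fin 2 → Fin 2 → V2)
    (h : ∀ i j, b.equivFun (f (b i) (b j)) = c i j) :
    ∀ x y, b.equivFun (f x y) = tm c (b.equivFun x) (b.equivFun y) := by
  have key : f.compr₂ (b.equivFun : G →ₗ[ℂ] V2)
      = (tmL c).compl₁₂ (b.equivFun : G →ₗ[ℂ] V2) (b.equivFun : G →ₗ[ℂ] V2) := by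
    apply LinearMap.ext_basis b b
    intro i j
    simp only [LinearMap.compr₂_apply, LinearMap.compl₁₂_apply, LinearEquiv.coe_coe]
    rw [h i j, equivFun_basis, equivFun_basis]
    exact (tm_single c i j).symm
  intro x y
  have h2 := LinearMap.congr_fun (LinearMap.congr_fun key x) y
  simpa [LinearMap.compr₂_apply, LinearMap.compl₁₂_apply, tmL] using h2

lemma mkIso2 {G : Type*} [AddCommGroup G] [Module ℂ G] (f g : G →ₗ[ℂ] G →ₗ[ℂ] G)
    (b : Basis (Fin 2) ℂ G) (c d : Fin 2 → Fin 2 → V2)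
    (hf : ∀ i j, b.equivFun (f (b i) (b j)) = c i j)
    (hg : ∀ i j, b.equivFun (g (b i) (b j)) = d i j) :
    Iso2 (fun x y => f x y) (fun x y => g x y) (tm c) (tm d) :=
  ⟨b.equivFun, repr_bilin f b c hf, repr_bilin g b d hg⟩

lemma zm_eq : zm = tm (tbl 0 0 0 0) := by
  funext x y
  simp [zm, tm_eq, tbl]

lemma basis_pair {G : Type*} [AddCommGroup G] [Module ℂ G] (hdim : finrank ℂ G = 2)
    {x y : G} (h : ∀ s t : ℂ, s • x + t • y = 0 → s = 0 ∧ t = 0) :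
    ∃ b : Basis (Fin 2) ℂ G, b 0 = x ∧ b 1 = y := by
  have li : LinearIndependent ℂ ![x, y] := LinearIndependent.pair_iff.2 h
  refine ⟨basisOfLinearIndependentOfCardEqFinrank li (by simp [hdim]), ?_, ?_⟩ <;>
    simp [coe_basisOfLinearIndependentOfCardEqFinrank]

lemma indep_of_not_mem_span {G : Type*} [AddCommGroup G] [Module ℂ G]
    {x y : G} (hx : x ≠ 0) (hy : y ∉ Submodule.span ℂ {x}) :
    ∀ s t : ℂ, s • x + t • y = 0 → s = 0 ∧ t = 0 := by
  intro s t hst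
  by_cases ht : t = 0
  · subst ht
    simp only [zero_smul, add_zero, smul_eq_zero] at hst
    exact ⟨hst.resolve_right hx, rfl⟩
  · exfalso
    apply hy
    rw [Submodule.mem_span_singleton]
    refine ⟨-(t⁻¹ * s), ?_⟩
    have h2 : t • y = (-s) • x := by linear_combination (norm := module) hst
    calc (-(t⁻¹ * s)) • x = t⁻¹ • (-s) • x := by rw [smul_smul]; ring_nf
    _ = t⁻¹ • (t • y) := by rw [h2]
    _ = y := inv_smul_smul₀ ht y

lemma exists_not_mem_span {G : Type*} [AddCommGroup G] [Module ℂ G]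
    (hdim : finrank ℂ G = 2) (x : G) : ∃ y, y ∉ Submodule.span ℂ {x} := by
  by_contra hcon
  push_neg at hcon
  have htop : Submodule.span ℂ {x} = ⊤ := Submodule.eq_top_iff'.2 hcon
  by_cases hx : x = 0
  · subst hx
    simp only [Submodule.span_zero_singleton] at htop
    have : finrank ℂ G = 0 := by
      have : Subsingleton G := by
        constructor; intro a b
        have ha : a ∈ (⊥ : Submodule ℂ G) := htop ▸ Submodule.mem_top
        have hb : b ∈ (⊥ : Submodule ℂ G) := htop ▸ Submodule.mem_top
        simp only [Submodule.mem_bot] at ha hb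
        rw [ha, hb]
      exact finrank_zero_of_subsingleton
    omega
  · have h1 : finrank ℂ (Submodule.span ℂ {x}) = 1 := finrank_span_singleton hx
    rw [htop, finrank_top] at h1
    omega

lemma sq_exists (ρ : ℂ) : ∃ σ : ℂ, σ * σ = ρ := by
  obtain ⟨z, hz⟩ := IsAlgClosed.exists_pow_nat_eq ρ (n := 2) (by norm_num)
  exact ⟨z, by rw [← hz]; ring⟩


lemma eqF0 {G : Type*} [AddCommGroup G] [Module ℂ G] (b : Basis (Fin 2) ℂ G) :
    b.equivFun (b 0) = ![(1:ℂ), 0] := by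
  funext k; rw [Basis.equivFun_self]; fin_cases k <;> simp

lemma eqF1 {G : Type*} [AddCommGroup G] [Module ℂ G] (b : Basis (Fin 2) ℂ G) :
    b.equivFun (b 1) = ![(0:ℂ), 1] := by
  funext k; rw [Basis.equivFun_self]; fin_cases k <;> simp

lemma table_entries {G : Type*} [AddCommGroup G] [Module ℂ G] (b : Basis (Fin 2) ℂ G)
    (f : G →ₗ[ℂ] G →ₗ[ℂ] G) (c : Fin 2 → Fin 2 → V2)
    (h00 : b.equivFun (f (b 0) (b 0)) = c 0 0)
    (h01 : b.equivFun (f (b 0) (b 1)) = c 0 1)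
    (h10 : b.equivFun (f (b 1) (b 0)) = c 1 0)
    (h11 : b.equivFun (f (b 1) (b 1)) = c 1 1) :
    ∀ i j, b.equivFun (f (b i) (b j)) = c i j := by
  simp only [Fin.forall_fin_two]
  exact ⟨⟨h00, h01⟩, h10, h11⟩

lemma expand2 {G : Type*} [AddCommGroup G] [Module ℂ G] (b : Basis (Fin 2) ℂ G) (u : G) :
    u = b.equivFun u 0 • b 0 + b.equivFun u 1 • b 1 := by
  have h := b.sum_equivFun u
  rw [Fin.sum_univ_two] at h
  exact h.symm

lemma classify_idem {G : Type*} [AddCommGroup G] [Module ℂ G] (hdim : finrank ℂ G = 2)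
    (mul : G →ₗ[ℂ] G →ₗ[ℂ] G)
    (hcomm : ∀ x y : G, mul x y = mul y x)
    (hassoc : ∀ x y z : G, mul (mul x y) z = mul x (mul y z))
    {e : G} (he0 : e ≠ 0) (hee : mul e e = e) :
    (∃ b : Basis (Fin 2) ℂ G, ∀ i j, b.equivFun (mul (b i) (b j)) = cA01 i j) ∨
    (∃ b : Basis (Fin 2) ℂ G, ∀ i j, b.equivFun (mul (b i) (b j)) = cA02 i j) ∨
    (∃ b : Basis (Fin 2) ℂ G, ∀ i j, b.equivFun (mul (b i) (b j)) = cA03 i j) := by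
  obtain ⟨y₀, hy₀⟩ := exists_not_mem_span hdim e
  have hep : mul e (mul e y₀) = mul e y₀ := by
    have h := hassoc e e y₀; rw [hee] at h; exact h.symm
  have hew : mul e (y₀ - mul e y₀) = 0 := by
    rw [map_sub, hep, sub_self]
  by_cases hw0 : y₀ - mul e y₀ = 0
  · -- e is a unit
    have hey : mul e y₀ = y₀ := by
      have := sub_eq_zero.1 hw0; exact this.symm
    have hind := indep_of_not_mem_span he0 hy₀
    obtain ⟨b, hb0, hb1⟩ := basis_pair hdim hind
    set γ := b.equivFun (mul y₀ y₀) 0 with hγ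
    set δ := b.equivFun (mul y₀ y₀) 1 with hδ
    have hqe : mul y₀ y₀ = γ • e + δ • y₀ := by
      have h := expand2 b (mul y₀ y₀); rw [hb0, hb1] at h; exact h
    set y' := y₀ - (δ/2) • e with hy'def
    have hey' : mul e y' = y' := by
      rw [hy'def, map_sub, map_smul, hey, hee]
    have hyy' : mul y' y' = (γ + δ^2/4) • e := by
      rw [hy'def]
      simp only [map_sub, map_smul, LinearMap.sub_apply, LinearMap.smul_apply]
      rw [hqe, hcomm y₀ e, hey, hee]
      match_scalars <;> ring
    have hy's : y' ∉ Submodule.span ℂ {e} := by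
      intro hmem
      apply hy₀
      have : y₀ = y' + (δ/2) • e := by rw [hy'def]; abel
      rw [this]
      exact Submodule.add_mem _ hmem (Submodule.smul_mem _ _ (Submodule.mem_span_singleton_self e))
    have hind' := indep_of_not_mem_span he0 hy's
    by_cases hρ : γ + δ^2/4 = 0
    · -- A02
      obtain ⟨b2, hb20, hb21⟩ := basis_pair hdim hind'
      right; left
      refine ⟨b2, ?_⟩
      have t00 : mul (b2 0) (b2 0) = b2 0 := by rw [hb20]; exact hee
      have t01 : mul (b2 0) (b2 1) = b2 1 := by rw [hb20, hb21]; exact hey'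
      have t10 : mul (b2 1) (b2 0) = b2 1 := by rw [hb20, hb21, hcomm]; exact hey'
      have t11 : mul (b2 1) (b2 1) = 0 := by rw [hb21, hyy', hρ, zero_smul]
      refine table_entries b2 mul cA02 ?_ ?_ ?_ ?_
      · rw [t00, eqF0]; simp [cA02, tbl]
      · rw [t01, eqF1]; simp [cA02, tbl]
      · rw [t10, eqF1]; simp [cA02, tbl]
      · rw [t11, map_zero]; simp [cA02, tbl]
    · -- A01 via square root
      obtain ⟨σ, hσ⟩ := sq_exists (γ + δ^2/4)
      have hσ0 : σ ≠ 0 := by intro h; apply hρ; rw [← hσ, h, mul_zero]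
      set z := σ⁻¹ • y' with hzdef
      have h1 : mul e z = z := by rw [hzdef, map_smul, hey']
      have h2 : mul z z = e := by
        rw [hzdef]
        simp only [map_smul, LinearMap.smul_apply]
        rw [hyy', smul_smul, smul_smul, ← hσ]
        rw [show σ⁻¹ * σ⁻¹ * (σ * σ) = 1 by field_simp]
        exact one_smul _ _
      have hzs : z ∉ Submodule.span ℂ {e} := by
        intro hmem
        apply hy's
        have : y' = σ • z := by rw [hzdef, smul_smul, mul_inv_cancel₀ hσ0, one_smul]
        rw [this]
        exact Submodule.smul_mem _ _ hmem
      have hindz := indep_of_not_mem_span he0 hzs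
      set f1 := (2⁻¹ : ℂ) • (e + z) with hf1def
      set f2 := (2⁻¹ : ℂ) • (e - z) with hf2def
      have hf1 : mul f1 f1 = f1 := by
        rw [hf1def]
        simp only [map_smul, map_add, map_sub, LinearMap.smul_apply, LinearMap.add_apply,
          LinearMap.sub_apply]
        rw [hee, h1, hcomm z e, h1, h2]
        match_scalars <;> ring
      have hf2 : mul f2 f2 = f2 := by
        rw [hf2def]
        simp only [map_smul, map_add, map_sub, LinearMap.smul_apply, LinearMap.add_apply,
          LinearMap.sub_apply]
        rw [hee, h1, hcomm z e, h1, h2]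
        match_scalars <;> ring
      have hf12 : mul f1 f2 = 0 := by
        rw [hf1def, hf2def]
        simp only [map_smul, map_add, map_sub, LinearMap.smul_apply, LinearMap.add_apply,
          LinearMap.sub_apply]
        rw [hee, h1, hcomm z e, h1, h2]
        match_scalars <;> ring
      have hf21 : mul f2 f1 = 0 := by rw [hcomm]; exact hf12
      have hindf : ∀ s t : ℂ, s • f1 + t • f2 = 0 → s = 0 ∧ t = 0 := by
        intro s t hst
        rw [hf1def, hf2def] at hst
        have h3 : ((s+t)/2) • e + ((s-t)/2) • z = 0 := by
          linear_combination (norm := module) hst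
        obtain ⟨hA, hB⟩ := hindz _ _ h3
        constructor
        · linear_combination hA + hB
        · linear_combination hA - hB
      obtain ⟨b1, hb10, hb11⟩ := basis_pair hdim hindf
      left
      refine ⟨b1, ?_⟩
      have t00 : mul (b1 0) (b1 0) = b1 0 := by rw [hb10]; exact hf1
      have t01 : mul (b1 0) (b1 1) = 0 := by rw [hb10, hb11]; exact hf12
      have t10 : mul (b1 1) (b1 0) = 0 := by rw [hb10, hb11]; exact hf21
      have t11 : mul (b1 1) (b1 1) = b1 1 := by rw [hb11]; exact hf2
      refine table_entries b1 mul cA01 ?_ ?_ ?_ ?_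
      · rw [t00, eqF0]; simp [cA01, tbl]
      · rw [t01, map_zero]; simp [cA01, tbl]
      · rw [t10, map_zero]; simp [cA01, tbl]
      · rw [t11, eqF1]; simp [cA01, tbl]
  · -- w ≠ 0 branch
    set w := y₀ - mul e y₀ with hwdef
    have hwspan : w ∉ Submodule.span ℂ {e} := by
      intro hmem
      obtain ⟨c, hc⟩ := Submodule.mem_span_singleton.1 hmem
      apply hw0
      have h4 : mul e w = c • e := by rw [← hc, map_smul, hee]
      rw [hew] at h4
      have hc0 : c = 0 := by
        rcases smul_eq_zero.1 h4.symm with h | h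
        · exact h
        · exact absurd h he0
      rw [← hc, hc0, zero_smul]
    have hind := indep_of_not_mem_span he0 hwspan
    obtain ⟨b, hb0, hb1⟩ := basis_pair hdim hind
    set s := b.equivFun (mul w w) 0 with hs
    set t := b.equivFun (mul w w) 1 with ht
    have hww : mul w w = s • e + t • w := by
      have h := expand2 b (mul w w); rw [hb0, hb1] at h; exact h
    have hs0 : s = 0 := by
      have h5 : mul e (mul w w) = 0 := by
        rw [← hassoc, hew, map_zero, LinearMap.zero_apply]
      rw [hww, map_add, map_smul, map_smul, hee, hew, smul_zero, add_zero] at h5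
      rcases smul_eq_zero.1 h5 with h | h
      · exact h
      · exact absurd h he0
    have hww' : mul w w = t • w := by rw [hww, hs0, zero_smul, zero_add]
    by_cases htz : t = 0
    · -- A03
      right; right
      refine ⟨b, ?_⟩
      have t00 : mul (b 0) (b 0) = b 0 := by rw [hb0]; exact hee
      have t01 : mul (b 0) (b 1) = 0 := by rw [hb0, hb1]; exact hew
      have t10 : mul (b 1) (b 0) = 0 := by rw [hb0, hb1, hcomm]; exact hew
      have t11 : mul (b 1) (b 1) = 0 := by rw [hb1, hww', htz, zero_smul]
      refine table_entries b mul cA03 ?_ ?_ ?_ ?_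
      · rw [t00, eqF0]; simp [cA03, tbl]
      · rw [t01, map_zero]; simp [cA03, tbl]
      · rw [t10, map_zero]; simp [cA03, tbl]
      · rw [t11, map_zero]; simp [cA03, tbl]
    · -- A01
      set f := t⁻¹ • w with hfdef
      have hff : mul f f = f := by
        rw [hfdef]
        simp only [map_smul, LinearMap.smul_apply]
        rw [hww', smul_smul, smul_smul]
        rw [show t⁻¹ * t⁻¹ * t = t⁻¹ by field_simp]
      have hef : mul e f = 0 := by rw [hfdef, map_smul, hew, smul_zero]
      have hfs : f ∉ Submodule.span ℂ {e} := by
        intro hmem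
        apply hwspan
        have : w = t • f := by rw [hfdef, smul_smul, mul_inv_cancel₀ htz, one_smul]
        rw [this]
        exact Submodule.smul_mem _ _ hmem
      have hindf := indep_of_not_mem_span he0 hfs
      obtain ⟨b1, hb10, hb11⟩ := basis_pair hdim hindf
      left
      refine ⟨b1, ?_⟩
      have t00 : mul (b1 0) (b1 0) = b1 0 := by rw [hb10]; exact hee
      have t01 : mul (b1 0) (b1 1) = 0 := by rw [hb10, hb11]; exact hef
      have t10 : mul (b1 1) (b1 0) = 0 := by rw [hb10, hb11, hcomm]; exact hef
      have t11 : mul (b1 1) (b1 1) = b1 1 := by rw [hb11]; exact hff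
      refine table_entries b1 mul cA01 ?_ ?_ ?_ ?_
      · rw [t00, eqF0]; simp [cA01, tbl]
      · rw [t01, map_zero]; simp [cA01, tbl]
      · rw [t10, map_zero]; simp [cA01, tbl]
      · rw [t11, eqF1]; simp [cA01, tbl]

lemma idem_of {M : Type*} [AddCommGroup M] [Module ℂ M] (mul : M →ₗ[ℂ] M →ₗ[ℂ] M)
    (hcomm : ∀ a b : M, mul a b = mul b a)
    (hassoc : ∀ a b c : M, mul (mul a b) c = mul a (mul b c))
    (x : M) (α β s t : ℂ)
    (hxu : mul x (mul x x) = α • x + β • (mul x x))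
    (e1 : 2*s*t*α + t^2*α*β = s) (e2 : s^2 + 2*s*t*β + t^2*(α+β^2) = t) :
    mul (s • x + t • (mul x x)) (s • x + t • (mul x x)) = s • x + t • (mul x x) := by
  have huu : mul (mul x x) (mul x x) = (α*β) • x + (α + β^2) • (mul x x) := by
    have h1 := hassoc x x (mul x x)
    rw [h1, hxu, map_add, map_smul, map_smul, hxu]
    match_scalars <;> ring
  simp only [map_add, map_smul, LinearMap.add_apply, LinearMap.smul_apply]
  rw [hcomm (mul x x) x, hxu, huu]
  match_scalars
  · linear_combination e2
  · linear_combination e1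


/-- Every nonzero 2-dimensional generic Poisson algebra over ℂ is
isomorphic to one of A01, A02, A03, A04 (with `[−,−] ≡ 0`) or to the algebra with
`· ≡ 0` and `[e1,e2] = e2 = -[e2,e1]`. -/
theorem statement6 (G : Type*) [AddCommGroup G] [Module ℂ G]
    (hdim : Module.finrank ℂ G = 2)
    (mul br : G →ₗ[ℂ] G →ₗ[ℂ] G)
    (hcomm : ∀ x y : G, mul x y = mul y x)
    (hassoc : ∀ x y z : G, mul (mul x y) z = mul x (mul y z))
    (hanti : ∀ x y : G, br x y = - br y x)
    (hcompat : ∀ x y z : G, br (mul x y) z = mul (br x z) y + mul x (br y z))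
    (hnz : (∃ x y : G, mul x y ≠ 0) ∨ (∃ x y : G, br x y ≠ 0)) :
    Iso2 (fun x y => mul x y) (fun x y => br x y) (tm cA01) zm ∨
    Iso2 (fun x y => mul x y) (fun x y => br x y) (tm cA02) zm ∨
    Iso2 (fun x y => mul x y) (fun x y => br x y) (tm cA03) zm ∨
    Iso2 (fun x y => mul x y) (fun x y => br x y) (tm cA04) zm ∨
    Iso2 (fun x y => mul x y) (fun x y => br x y) zm (tm (tbl 0 ![0,1] ![0,-1] 0)) := by
  have hzz : ∀ z : G, br z z = 0 := by
    intro z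
    have h := hanti z z
    have h2 : br z z + br z z = 0 := by nth_rewrite 1 [h]; exact neg_add_cancel _
    have h3 : (2:ℂ) • br z z = 0 := by rw [two_smul]; exact h2
    simpa using (smul_eq_zero.1 h3).resolve_left (by norm_num)
  by_cases hbrz : ∀ x y : G, br x y = 0
  · -- bracket is zero: classify the commutative associative multiplication
    have hgz : ∀ (b : Basis (Fin 2) ℂ G) (i j : Fin 2),
        b.equivFun (br (b i) (b j)) = tbl 0 0 0 0 i j := by
      intro b i j
      rw [hbrz, map_zero]
      fin_cases i <;> fin_cases j <;> simp [tbl]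
    obtain ⟨x1, y1, hm⟩ : ∃ x y : G, mul x y ≠ 0 := by
      rcases hnz with h | ⟨x, y, h⟩
      · exact h
      · exact absurd (hbrz x y) h
    have final : ∀ e : G, e ≠ 0 → mul e e = e →
        (Iso2 (fun x y => mul x y) (fun x y => br x y) (tm cA01) zm ∨
        Iso2 (fun x y => mul x y) (fun x y => br x y) (tm cA02) zm ∨
        Iso2 (fun x y => mul x y) (fun x y => br x y) (tm cA03) zm ∨
        Iso2 (fun x y => mul x y) (fun x y => br x y) (tm cA04) zm ∨
        Iso2 (fun x y => mul x y) (fun x y => br x y) zm (tm (tbl 0 ![0,1] ![0,-1] 0))) := by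
      intro e he0 hee
      rcases classify_idem hdim mul hcomm hassoc he0 hee with ⟨b, hb⟩ | ⟨b, hb⟩ | ⟨b, hb⟩
      · left; rw [zm_eq]; exact mkIso2 mul br b cA01 _ hb (hgz b)
      · right; left; rw [zm_eq]; exact mkIso2 mul br b cA02 _ hb (hgz b)
      · right; right; left; rw [zm_eq]; exact mkIso2 mul br b cA03 _ hb (hgz b)
    obtain ⟨x, hx⟩ : ∃ x : G, mul x x ≠ 0 := by
      by_contra hc
      push_neg at hc
      apply hm
      have h2 : mul (x1 + y1) (x1 + y1) = 0 := hc _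
      simp only [map_add, LinearMap.add_apply] at h2
      rw [hc x1, hc y1, hcomm y1 x1] at h2
      have h3 : (2:ℂ) • mul x1 y1 = 0 := by
        rw [two_smul]; linear_combination (norm := module) h2
      simpa using (smul_eq_zero.1 h3).resolve_left (by norm_num)
    have hx0 : x ≠ 0 := by
      intro h; apply hx; rw [h]; simp
    by_cases hu : mul x x ∈ Submodule.span ℂ {x}
    · -- u proportional to x : rescale to an idempotent
      obtain ⟨lam, hlam⟩ := Submodule.mem_span_singleton.1 hu
      have hlam0 : lam ≠ 0 := by
        intro h; apply hx; rw [← hlam, h, zero_smul]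
      have hee : mul (lam⁻¹ • x) (lam⁻¹ • x) = lam⁻¹ • x := by
        simp only [map_smul, LinearMap.smul_apply]
        rw [← hlam, smul_smul, smul_smul,
          show lam⁻¹ * lam⁻¹ * lam = lam⁻¹ by field_simp]
      exact final _ (smul_ne_zero (inv_ne_zero hlam0) hx0) hee
    · -- (x, x·x) is a basis
      have hind := indep_of_not_mem_span hx0 hu
      obtain ⟨b, hb0, hb1⟩ := basis_pair hdim hind
      set α := b.equivFun (mul x (mul x x)) 0 with hαdef
      set β := b.equivFun (mul x (mul x x)) 1 with hβdef
      have hxu : mul x (mul x x) = α • x + β • mul x x := by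
        have h := expand2 b (mul x (mul x x)); rw [hb0, hb1] at h; exact h
      have huu : mul (mul x x) (mul x x) = (α*β) • x + (α + β^2) • mul x x := by
        have h1 := hassoc x x (mul x x)
        rw [h1, hxu, map_add, map_smul, map_smul, hxu]
        match_scalars <;> ring
      by_cases hab : α = 0 ∧ β = 0
      · -- A04
        obtain ⟨hA0, hB0⟩ := hab
        have hxu0 : mul x (mul x x) = 0 := by
          rw [hxu, hA0, hB0, zero_smul, zero_smul, add_zero]
        have huu0 : mul (mul x x) (mul x x) = 0 := by
          rw [huu, hA0, hB0]; simp
        right; right; right; left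
        rw [zm_eq]
        refine mkIso2 mul br b cA04 _ ?_ (hgz b)
        refine table_entries b mul cA04 ?_ ?_ ?_ ?_
        · rw [hb0, ← hb1, eqF1]; simp [cA04, tbl]
        · rw [hb0, hb1, hxu0, map_zero]; simp [cA04, tbl]
        · rw [hb0, hb1, hcomm, hxu0, map_zero]; simp [cA04, tbl]
        · rw [hb1, huu0, map_zero]; simp [cA04, tbl]
      · -- produce an idempotent
        obtain ⟨lam, hlam0, hlam⟩ : ∃ l : ℂ, l ≠ 0 ∧ l^2 = β * l + α := by
          by_cases hA0 : α = 0
          · have hB0 : β ≠ 0 := by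
              intro h; exact hab ⟨hA0, h⟩
            exact ⟨β, hB0, by rw [hA0]; ring⟩
          · obtain ⟨σ, hσ⟩ := sq_exists (β^2 + 4*α)
            have hl2 : ((β + σ)/2)^2 = β * ((β + σ)/2) + α := by
              linear_combination hσ/4
            refine ⟨(β + σ)/2, ?_, hl2⟩
            intro h
            apply hA0
            rw [h] at hl2
            simpa using hl2.symm
        set μ := β - lam with hμ
        have hβμ : β = lam + μ := by rw [hμ]; ring
        have hαμ : α = -(lam*μ) := by rw [hμ]; linear_combination -hlam
        by_cases hlm : lam = μ
        · -- double root
          have hβ2 : β = 2*lam := by rw [hβμ, ← hlm]; ring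
          have hα2 : α = -(lam^2) := by rw [hαμ, ← hlm]; ring
          have hd : lam * lam⁻¹ = 1 := mul_inv_cancel₀ hlam0
          have hee := idem_of mul hcomm hassoc x α β (2*lam⁻¹) (-(lam⁻¹*lam⁻¹)) hxu
            (by rw [hα2, hβ2]
                linear_combination (-2*lam⁻¹*(lam^2*lam⁻¹^2 - lam*lam⁻¹ - 1)) * hd)
            (by rw [hα2, hβ2]
                linear_combination (lam⁻¹^2*(3*lam*lam⁻¹-5)) * hd)
          have he0 : (2*lam⁻¹) • x + (-(lam⁻¹*lam⁻¹)) • mul x x ≠ 0 := by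
            intro h
            have h2 := (hind _ _ h).2
            rw [neg_eq_zero, mul_self_eq_zero] at h2
            rw [h2, mul_zero] at hd
            exact zero_ne_one hd
          exact final _ he0 hee
        · -- two distinct roots
          have hD0 : lam * (lam - μ) ≠ 0 := mul_ne_zero hlam0 (sub_ne_zero.2 hlm)
          have ht : (lam * (lam - μ))⁻¹ * (lam * (lam - μ)) = 1 := inv_mul_cancel₀ hD0
          have hee := idem_of mul hcomm hassoc x α β (-μ * (lam * (lam - μ))⁻¹)
            ((lam * (lam - μ))⁻¹) hxu
            (by rw [hαμ, hβμ]
                linear_combination (-μ * (lam * (lam - μ))⁻¹) * ht)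
            (by rw [hαμ, hβμ]
                linear_combination ((lam * (lam - μ))⁻¹) * ht)
          have he0 : (-μ * (lam * (lam - μ))⁻¹) • x + ((lam * (lam - μ))⁻¹) • mul x x ≠ 0 := by
            intro h
            have h2 := (hind _ _ h).2
            rw [h2, zero_mul] at ht
            exact zero_ne_one ht
          exact final _ he0 hee
  · -- bracket nonzero
    push_neg at hbrz
    obtain ⟨x0, y0, hw⟩ := hbrz
    set w0 := br x0 y0 with hw0def
    have hy00 : y0 ≠ 0 := by
      intro h; apply hw; rw [hw0def, h, map_zero]
    have hindxy : ∀ s t : ℂ, s • x0 + t • y0 = 0 → s = 0 ∧ t = 0 := by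
      intro s t hst
      have h1 : br (s • x0 + t • y0) y0 = 0 := by rw [hst]; simp
      simp only [map_add, map_smul, LinearMap.add_apply, LinearMap.smul_apply] at h1
      rw [hzz, smul_zero, add_zero] at h1
      have hs : s = 0 := (smul_eq_zero.1 h1).resolve_right hw
      refine ⟨hs, ?_⟩
      rw [hs, zero_smul, zero_add] at hst
      exact (smul_eq_zero.1 hst).resolve_right hy00
    obtain ⟨b0, hb00, hb01⟩ := basis_pair hdim hindxy
    set p := b0.equivFun w0 0 with hpdef
    set q := b0.equivFun w0 1 with hqdef
    have hwexp : w0 = p • x0 + q • y0 := by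
      have h := expand2 b0 w0; rw [hb00, hb01] at h; exact h
    have hx0w : br x0 w0 = q • w0 := by
      calc br x0 w0 = br x0 (p • x0 + q • y0) := by rw [← hwexp]
      _ = p • br x0 x0 + q • br x0 y0 := by simp
      _ = q • w0 := by rw [hzz, smul_zero, zero_add, ← hw0def]
    have hy0w : br y0 w0 = (-p) • w0 := by
      calc br y0 w0 = br y0 (p • x0 + q • y0) := by rw [← hwexp]
      _ = p • br y0 x0 + q • br y0 y0 := by simp
      _ = (-p) • w0 := by
          rw [hzz, smul_zero, add_zero, hanti y0 x0, ← hw0def, smul_neg, neg_smul]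
    obtain ⟨e1, he1⟩ : ∃ e1 : G, br e1 w0 = w0 := by
      by_cases hq : q = 0
      · have hp : p ≠ 0 := by
          intro h0
          apply hw
          rw [hwexp, h0, hq, zero_smul, zero_smul, add_zero]
        refine ⟨(-p⁻¹) • y0, ?_⟩
        simp only [map_smul, LinearMap.smul_apply]
        rw [hy0w, smul_smul, show -p⁻¹ * -p = 1 by field_simp, one_smul]
      · refine ⟨q⁻¹ • x0, ?_⟩
        simp only [map_smul, LinearMap.smul_apply]
        rw [hx0w, smul_smul, inv_mul_cancel₀ hq, one_smul]
    have he10 : e1 ≠ 0 := by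
      intro h
      apply hw
      rw [← he1, h]
      simp
    have hinde1w : ∀ s t : ℂ, s • e1 + t • w0 = 0 → s = 0 ∧ t = 0 := by
      intro s t hst
      have h1 : br e1 (s • e1 + t • w0) = 0 := by rw [hst]; simp
      simp only [map_add, map_smul] at h1
      rw [hzz, smul_zero, he1, zero_add] at h1
      have ht : t = 0 := (smul_eq_zero.1 h1).resolve_right hw
      refine ⟨?_, ht⟩
      rw [ht, zero_smul, add_zero] at hst
      exact (smul_eq_zero.1 hst).resolve_right he10
    obtain ⟨b, hb0, hb1⟩ := basis_pair hdim hinde1w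
    have hwne : w0 ≠ 0 := hw
    -- mul is zero
    set a0 := b.equivFun (mul e1 e1) 0 with ha0def
    set a1 := b.equivFun (mul e1 e1) 1 with ha1def
    have hA : mul e1 e1 = a0 • e1 + a1 • w0 := by
      have h := expand2 b (mul e1 e1); rw [hb0, hb1] at h; exact h
    have E1 : br (mul e1 e1) e1 = 0 := by
      rw [hcompat e1 e1 e1, hzz]
      simp
    have ha1 : a1 = 0 := by
      have h1 : br (a0 • e1 + a1 • w0) e1 = 0 := by rw [← hA]; exact E1
      simp only [map_add, map_smul, LinearMap.add_apply, LinearMap.smul_apply] at h1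
      rw [hzz, smul_zero, zero_add, hanti w0 e1, he1] at h1
      rw [smul_neg, neg_eq_zero] at h1
      exact (smul_eq_zero.1 h1).resolve_right hwne
    have E2 : a0 • w0 = mul e1 w0 + mul e1 w0 := by
      have h6 := hcompat e1 e1 w0
      rw [he1, hcomm w0 e1] at h6
      rw [hA, ha1, zero_smul, add_zero] at h6
      simp only [map_smul, LinearMap.smul_apply] at h6
      rw [he1] at h6
      exact h6
    have hB : mul e1 w0 = (2⁻¹ * a0) • w0 := by
      have h9 : (2:ℂ) • mul e1 w0 = a0 • w0 := by
        rw [two_smul]; linear_combination (norm := module) -E2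
      rw [← smul_smul, ← h9, smul_smul, show (2⁻¹ * 2 : ℂ) = 1 by norm_num, one_smul]
    set c0 := b.equivFun (mul w0 w0) 0 with hc0def
    set c1 := b.equivFun (mul w0 w0) 1 with hc1def
    have hC : mul w0 w0 = c0 • e1 + c1 • w0 := by
      have h := expand2 b (mul w0 w0); rw [hb0, hb1] at h; exact h
    have hc0 : c0 = 0 := by
      have E3 : br (mul w0 w0) w0 = 0 := by
        rw [hcompat w0 w0 w0, hzz]
        simp
      have h1 : br (c0 • e1 + c1 • w0) w0 = 0 := by rw [← hC]; exact E3
      simp only [map_add, map_smul, LinearMap.add_apply, LinearMap.smul_apply] at h1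
      rw [hzz, smul_zero, add_zero, he1] at h1
      exact (smul_eq_zero.1 h1).resolve_right hwne
    have hC' : mul w0 w0 = c1 • w0 := by rw [hC, hc0, zero_smul, zero_add]
    have hc1 : c1 = 0 := by
      have E4 : br (mul w0 w0) e1 = -(mul w0 w0) + -(mul w0 w0) := by
        rw [hcompat w0 w0 e1, hanti w0 e1, he1]
        simp only [map_neg, LinearMap.neg_apply]
      have h7 : br (c1 • w0) e1 = -(c1 • w0) + -(c1 • w0) := by
        rw [← hC']
        exact E4
      simp only [map_smul, LinearMap.smul_apply] at h7
      rw [hanti w0 e1, he1] at h7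
      have h8 : c1 • w0 = 0 := by linear_combination (norm := module) h7
      exact (smul_eq_zero.1 h8).resolve_right hwne
    have hCzero : mul w0 w0 = 0 := by rw [hC', hc1, zero_smul]
    have ha0 : a0 = 0 := by
      have E5 := hassoc e1 e1 w0
      rw [hA, ha1, zero_smul, add_zero, hB] at E5
      simp only [map_smul, LinearMap.smul_apply] at E5
      rw [hB, smul_smul, smul_smul] at E5
      have h10 : (a0 * (2⁻¹ * a0) - 2⁻¹ * a0 * (2⁻¹ * a0)) • w0 = 0 := by
        rw [sub_smul, E5, sub_self]
      have h11 := (smul_eq_zero.1 h10).resolve_right hwne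
      have h12 : a0^2 = 0 := by linear_combination 4 * h11
      exact pow_eq_zero_iff (by norm_num) |>.1 h12
    have hAz : mul e1 e1 = 0 := by rw [hA, ha0, ha1, zero_smul, zero_smul, add_zero]
    have hBz : mul e1 w0 = 0 := by rw [hB, ha0, mul_zero, zero_smul]
    -- conclude
    right; right; right; right
    rw [zm_eq]
    refine mkIso2 mul br b (tbl 0 0 0 0) (tbl 0 ![0,1] ![0,-1] 0) ?_ ?_
    · refine table_entries b mul _ ?_ ?_ ?_ ?_
      · rw [hb0, hAz, map_zero]; simp [tbl]
      · rw [hb0, hb1, hBz, map_zero]; simp [tbl]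
      · rw [hb0, hb1, hcomm, hBz, map_zero]; simp [tbl]
      · rw [hb1, hCzero, map_zero]; simp [tbl]
    · refine table_entries b br _ ?_ ?_ ?_ ?_
      · rw [hb0, hzz, map_zero]; simp [tbl]
      · rw [hb0, hb1, he1, ← hb1, eqF1]; simp [tbl]
      · rw [hb0, hb1, hanti w0 e1, he1, map_neg, ← hb1, eqF1]
        funext k
        fin_cases k <;> simp [tbl]
      · rw [hb1, hzz, map_zero]; simp [tbl]
end
end
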